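/- Let R be a commutative ring, fix m attributes with nonempty finite domains D a for a : Fin m, Tup := Π (a : Fin m), D a, one-dimensional variables x : Π (a : Fin m), D a → R, a finite type K of multi-dimensional statistics with per-attribute decidable membership predicates ρ j a ⊆ D a, the conjunctive predicate π j t := ∀ a, t a ∈ ρ j a, multi-dimensional variables δ : K → R, and P := Σ_{t : Tup} (∏_a x a (t a)) · ∏ over those j : K with π j t of δ j. For a finite subset S ⊆ K and attribute a, let R_{a,S} := {v ∈ D a | ∀ j ∈ S, v ∈ ρ j a}, and for a set of attributes 𝓘 ⊆ Fin m let J_𝓘 be the collection of finite subsets S ⊆ K such that (for every a, R_{a,S} ≠ D a if and only if a ∈ 𝓘) and R_{a,S} ≠ ∅ for every a. Then P = Σ over all 𝓘 ⊆ Fin m of (∏_{a ∉ 𝓘} Σ_{v ∈ D a} x a v) · (Σ_{S ∈ J_𝓘} (∏_{a ∈ 𝓘} Σ_{v ∈ R_{a,S}} x a v) · (∏_{j ∈ S} (δ j − 1))). -/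

import Mathlib

open Finset in
/-- Middle lemma: LHS equals sum over all S. -/
theorem auxA (R : Type*) [CommRing R] (m : ℕ) (D : Fin m → Type*)
    [∀ a, Fintype (D a)] [∀ a, DecidableEq (D a)]
    (x : ∀ a : Fin m, D a → R)
    (K : Type*) [Fintype K] [DecidableEq K]
    (ρ : K → ∀ a : Fin m, Finset (D a)) (δ : K → R) :
    ∑ t : ∀ a : Fin m, D a,
        (∏ a : Fin m, x a (t a)) *
          ∏ j ∈ Finset.univ.filter (fun j : K => ∀ a : Fin m, t a ∈ ρ j a), δ j =
    ∑ S : Finset K,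
      (∏ a : Fin m, ∑ v ∈ Finset.univ.filter (fun v : D a => ∀ j ∈ S, v ∈ ρ j a), x a v) *
        ∏ j ∈ S, (δ j - 1) := by
  classical
  have hδ : ∀ t : ∀ a : Fin m, D a,
      ∏ j ∈ Finset.univ.filter (fun j : K => ∀ a : Fin m, t a ∈ ρ j a), δ j
        = ∑ S : Finset K, if (∀ j ∈ S, ∀ a, t a ∈ ρ j a) then ∏ j ∈ S, (δ j - 1) else 0 := by
    intro t
    set F := Finset.univ.filter (fun j : K => ∀ a : Fin m, t a ∈ ρ j a) with hF
    have h1 : ∏ j ∈ F, δ j = ∏ j ∈ F, ((δ j - 1) + 1) := by simp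
    rw [h1, Finset.prod_add]
    have h2 : F.powerset = Finset.univ.filter (· ⊆ F) := by
      ext S; simp
    rw [h2, Finset.sum_filter]
    refine Finset.sum_congr rfl fun S _ => ?_
    have h3 : S ⊆ F ↔ ∀ j ∈ S, ∀ a, t a ∈ ρ j a := by
      constructor
      · intro h j hj; exact (Finset.mem_filter.1 (h hj)).2
      · intro h j hj; exact Finset.mem_filter.2 ⟨Finset.mem_univ _, h j hj⟩
    simp [h3]
  simp_rw [hδ, Finset.mul_sum]
  rw [Finset.sum_comm]
  refine Finset.sum_congr rfl fun S _ => ?_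
  have key : ∏ a : Fin m, ∑ v ∈ Finset.univ.filter (fun v : D a => ∀ j ∈ S, v ∈ ρ j a), x a v
      = ∑ t ∈ Fintype.piFinset (fun a => Finset.univ.filter (fun v : D a => ∀ j ∈ S, v ∈ ρ j a)),
          ∏ a, x a (t a) := Finset.prod_univ_sum _ _
  rw [key, Finset.sum_mul]
  rw [← Finset.sum_filter_of_ne (s := Finset.univ)
    (f := fun t => (∏ a : Fin m, x a (t a)) * if (∀ j ∈ S, ∀ a, t a ∈ ρ j a) then ∏ j ∈ S, (δ j - 1) else 0)
    (p := fun t => t ∈ Fintype.piFinset (fun a => Finset.univ.filter (fun v : D a => ∀ j ∈ S, v ∈ ρ j a)))]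
  · rw [Finset.filter_univ_mem]
    refine Finset.sum_congr rfl fun t ht => ?_
    have : ∀ j ∈ S, ∀ a, t a ∈ ρ j a := by
      intro j hj a
      have := Fintype.mem_piFinset.1 ht a
      exact (Finset.mem_filter.1 this).2 j hj
    rw [if_pos this]
  · intro t _ hne
    have hc : ∀ j ∈ S, ∀ a, t a ∈ ρ j a := by
      by_contra h
      simp [h] at hne
    exact Fintype.mem_piFinset.2 fun a => Finset.mem_filter.2 ⟨Finset.mem_univ _, fun j hj => hc j hj a⟩

theorem auxB (R : Type*) [CommRing R] (m : ℕ) (D : Fin m → Type*)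
    [∀ a, Fintype (D a)] [∀ a, DecidableEq (D a)]
    (x : ∀ a : Fin m, D a → R)
    (K : Type*) [Fintype K] [DecidableEq K]
    (ρ : K → ∀ a : Fin m, Finset (D a)) (δ : K → R) :
    (∑ 𝓘 : Finset (Fin m),
        (∏ a ∈ 𝓘ᶜ, ∑ v : D a, x a v) *
          ∑ S ∈ Finset.univ.filter (fun S : Finset K =>
              (∀ a : Fin m,
                  (Finset.univ.filter (fun v : D a => ∀ j ∈ S, v ∈ ρ j a) ≠
                      Finset.univ ↔ a ∈ 𝓘)) ∧
                ∀ a : Fin m,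
                  Finset.univ.filter (fun v : D a => ∀ j ∈ S, v ∈ ρ j a) ≠ ∅),
            (∏ a ∈ 𝓘,
                ∑ v ∈ Finset.univ.filter (fun v : D a => ∀ j ∈ S, v ∈ ρ j a), x a v) *
              ∏ j ∈ S, (δ j - 1)) =
    ∑ S : Finset K,
      (∏ a : Fin m, ∑ v ∈ Finset.univ.filter (fun v : D a => ∀ j ∈ S, v ∈ ρ j a), x a v) *
        ∏ j ∈ S, (δ j - 1) := by
  classical
  set Rset : Finset K → ∀ a : Fin m, Finset (D a) :=
    fun S a => Finset.univ.filter (fun v : D a => ∀ j ∈ S, v ∈ ρ j a) with hRset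
  simp_rw [Finset.mul_sum, Finset.sum_filter]
  rw [Finset.sum_comm]
  refine Finset.sum_congr rfl fun S _ => ?_
  have hback : ∀ a : Fin m, (∑ v : D a, if (∀ j ∈ S, v ∈ ρ j a) then x a v else 0)
      = ∑ v ∈ Rset S a, x a v := fun a => (Finset.sum_filter _ _).symm
  simp_rw [hback]
  have hiff : ∀ 𝓘 : Finset (Fin m),
      ((∀ a : Fin m, (Rset S a ≠ Finset.univ ↔ a ∈ 𝓘)) ∧ ∀ a : Fin m, Rset S a ≠ ∅)
      ↔ (𝓘 = Finset.univ.filter (fun a => Rset S a ≠ Finset.univ) ∧ ∀ a : Fin m, Rset S a ≠ ∅) := by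
    intro 𝓘
    constructor
    · rintro ⟨h1, h2⟩
      refine ⟨?_, h2⟩
      ext a; simp [← h1 a]
    · rintro ⟨rfl, h2⟩
      exact ⟨fun a => by simp, h2⟩
  simp_rw [show ∀ a, Finset.univ.filter (fun v : D a => ∀ j ∈ S, v ∈ ρ j a) = Rset S a from fun a => rfl]
  simp_rw [hiff]
  by_cases hne : ∀ a : Fin m, Rset S a ≠ ∅
  · rw [Finset.sum_eq_single (Finset.univ.filter (fun a => Rset S a ≠ Finset.univ))]
    · rw [if_pos ⟨rfl, hne⟩]
      set 𝓘₀ := Finset.univ.filter (fun a => Rset S a ≠ Finset.univ) with h𝓘₀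
      have hcompl : ∏ a ∈ 𝓘₀ᶜ, ∑ v : D a, x a v = ∏ a ∈ 𝓘₀ᶜ, ∑ v ∈ Rset S a, x a v := by
        refine Finset.prod_congr rfl fun a ha => ?_
        have : Rset S a = Finset.univ := by
          by_contra h
          exact (Finset.mem_compl.1 ha) (Finset.mem_filter.2 ⟨Finset.mem_univ _, h⟩)
        rw [this]
      rw [hcompl, ← Finset.prod_mul_prod_compl 𝓘₀ (fun a => ∑ v ∈ Rset S a, x a v)]
      ring
    · intro 𝓘 _ h𝓘
      rw [if_neg]
      rintro ⟨rfl, -⟩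
      exact h𝓘 rfl
    · intro h; exact absurd (Finset.mem_univ _) h
  · have hzero : ∏ a : Fin m, ∑ v ∈ Rset S a, x a v = 0 := by
      push_neg at hne
      obtain ⟨a, ha⟩ := hne
      exact Finset.prod_eq_zero (Finset.mem_univ a) (by rw [ha]; simp)
    rw [hzero, zero_mul]
    rw [Finset.sum_eq_zero]
    intro 𝓘 _
    rw [if_neg]
    rintro ⟨-, h⟩
    exact hne h



/-- The compression theorem for the MaxEnt data summary. With
`R_{a,S} := {v ∈ D a | ∀ j ∈ S, v ∈ ρ j a}` and
`J_𝓘 := {S ⊆ K | (∀ a, R_{a,S} ≠ D a ↔ a ∈ 𝓘) ∧ ∀ a, R_{a,S} ≠ ∅}`, we have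
`P = ∑_{𝓘 ⊆ Fin m} (∏_{a ∉ 𝓘} ∑_v x a v) ·
      (∑_{S ∈ J_𝓘} (∏_{a ∈ 𝓘} ∑_{v ∈ R_{a,S}} x a v) · ∏_{j ∈ S} (δ j − 1))`. -/
theorem stmt_13 (R : Type*) [CommRing R] (m : ℕ) (D : Fin m → Type*)
    [∀ a, Fintype (D a)] [∀ a, DecidableEq (D a)] [∀ a, Nonempty (D a)]
    (x : ∀ a : Fin m, D a → R)
    (K : Type*) [Fintype K] [DecidableEq K]
    (ρ : K → ∀ a : Fin m, Finset (D a)) (δ : K → R) :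
    ∑ t : ∀ a : Fin m, D a,
        (∏ a : Fin m, x a (t a)) *
          ∏ j ∈ Finset.univ.filter (fun j : K => ∀ a : Fin m, t a ∈ ρ j a), δ j =
      ∑ 𝓘 : Finset (Fin m),
        (∏ a ∈ 𝓘ᶜ, ∑ v : D a, x a v) *
          ∑ S ∈ Finset.univ.filter (fun S : Finset K =>
              (∀ a : Fin m,
                  (Finset.univ.filter (fun v : D a => ∀ j ∈ S, v ∈ ρ j a) ≠
                      Finset.univ ↔ a ∈ 𝓘)) ∧
                ∀ a : Fin m,
                  Finset.univ.filter (fun v : D a => ∀ j ∈ S, v ∈ ρ j a) ≠ ∅),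
            (∏ a ∈ 𝓘,
                ∑ v ∈ Finset.univ.filter (fun v : D a => ∀ j ∈ S, v ∈ ρ j a), x a v) *
              ∏ j ∈ S, (δ j - 1) :=
  (auxA R m D x K ρ δ).trans (auxB R m D x K ρ δ).symm
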